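/- Let e = 2m with m ≥ 1, suppose s divides m and m/s ≡ 0 (mod 2), and let S = {β ∈ F_q : the equation X^{p^{2l}} + X = -β^{p^l} has a solution X in F_q}. Then |S| = p^{e-2s}. -/

import Mathlib

open scoped BigOperators

noncomputable section

/-- The primitive `p`-th root of unity `ζ_p = exp(2πi/p)`. -/
def zetaP (p : ℕ) : ℂ := Complex.exp (2 * Real.pi * Complex.I / p)

/-- The absolute trace map from `F_q = GF(p^e)` onto `F_p`. -/
def tr (p e : ℕ) [Fact p.Prime] (x : GaloisField p e) : ZMod p :=
  Algebra.trace (ZMod p) (GaloisField p e) x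

/-- The Weil sum `S(α, β) = Σ_{x ∈ F_q} ζ_p^{Tr(α x^{p^l+1} + β x)}`. -/
def weilSum (p e l : ℕ) [Fact p.Prime] (α β : GaloisField p e) : ℂ :=
  letI : Fintype (GaloisField p e) := Fintype.ofFinite _
  ∑ x : GaloisField p e, zetaP p ^ (tr p e (α * x ^ (p ^ l + 1) + β * x)).val

/- The quadratic character `η` of `F_p`, integer-valued:
`η(0) = 0`, `η(x) = 1` for nonzero squares, `η(x) = -1` for nonsquares. -/
open Classical in
def eta (p : ℕ) (x : ZMod p) : ℤ :=
  if x = 0 then 0 else if IsSquare x then 1 else -1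

/- The cyclotomic classes of order 2 in `F_p^*`: `cyc p 0` is the set of nonzero
squares `C_0^{(2,p)}`, and `cyc p 1` is the set of nonsquares `C_1^{(2,p)}`. -/
open Classical in
def cyc (p : ℕ) [Fact p.Prime] (i : ℕ) : Finset (ZMod p) :=
  Finset.univ.filter (fun x => x ≠ 0 ∧ (if i = 0 then IsSquare x else ¬ IsSquare x))

/-- `ψ_3(a) = ((p-1)/2) p^{e-3} Σ_{z1 ∈ F_p^*} ζ_p^{-z1} Σ_{z3 ∈ F_p^*} S(z1, a z3)`. -/
def psi3 (p e l : ℕ) [Fact p.Prime] (a : GaloisField p e) : ℂ :=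
  ((p : ℂ) - 1) / 2 * (p : ℂ) ^ ((e : ℤ) - 3) *
    ∑ z1 ∈ ({0}ᶜ : Finset (ZMod p)), zetaP p ^ (-z1).val *
      ∑ z3 ∈ ({0}ᶜ : Finset (ZMod p)),
        weilSum p e l (algebraMap (ZMod p) (GaloisField p e) z1)
          (a * algebraMap (ZMod p) (GaloisField p e) z3)

/-- `ψ_4^{(i)}(a, b) = p^{e-3} Σ_{c ∈ C_i} Σ_{z1 ∈ F_p^*} ζ_p^{-z1}
      Σ_{z2 ∈ F_p^*} ζ_p^{-c z2} S(z1, -a b⁻¹ z2)`, for `b ∈ F_p^*`. -/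
def psi4 (p e l : ℕ) [Fact p.Prime] (i : ℕ) (a : GaloisField p e) (b : ZMod p) : ℂ :=
  (p : ℂ) ^ ((e : ℤ) - 3) *
    ∑ c ∈ cyc p i, ∑ z1 ∈ ({0}ᶜ : Finset (ZMod p)), zetaP p ^ (-z1).val *
      ∑ z2 ∈ ({0}ᶜ : Finset (ZMod p)), zetaP p ^ (-(c * z2)).val *
        weilSum p e l (algebraMap (ZMod p) (GaloisField p e) z1)
          (-a * algebraMap (ZMod p) (GaloisField p e) (b⁻¹ * z2))

/-- `T_i(a,b) = |{(x1,x2) ∈ F_q² : Tr(x1^{p^l+1}) = 1, Tr(x2) ∈ C_i, Tr(a x1 + b x2) = 0}|`. -/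
def Tcount (p e l : ℕ) [Fact p.Prime] (i : ℕ) (a b : GaloisField p e) : ℕ :=
  Nat.card {x : GaloisField p e × GaloisField p e //
    tr p e (x.1 ^ (p ^ l + 1)) = 1 ∧ tr p e x.2 ∈ cyc p i ∧ tr p e (a * x.1 + b * x.2) = 0}

/-- The defining set `D_i = {(x1,x2) ∈ F_q² : Tr(x1^{p^l+1}) = 1, Tr(x2) ∈ C_i^{(2,p)}}`. -/
def Dset (p e l : ℕ) [Fact p.Prime] (i : ℕ) : Set (GaloisField p e × GaloisField p e) :=
  {x | tr p e (x.1 ^ (p ^ l + 1)) = 1 ∧ tr p e x.2 ∈ cyc p i}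

/-- The codeword of `C_{D_i}` indexed by `(a, b) ∈ F_q²`:
the vector `(Tr(a x1 + b x2))_{(x1,x2) ∈ D_i}`. -/
def codeword (p e l : ℕ) [Fact p.Prime] (i : ℕ) (a b : GaloisField p e) :
    Dset p e l i → ZMod p :=
  fun x => tr p e (a * x.1.1 + b * x.1.2)

/-- The linear code `C_{D_i} = {(Tr(a x1 + b x2))_{(x1,x2) ∈ D_i} : a, b ∈ F_q}`. -/
def code (p e l : ℕ) [Fact p.Prime] (i : ℕ) : Set (Dset p e l i → ZMod p) :=
  Set.range (fun ab : GaloisField p e × GaloisField p e => codeword p e l i ab.1 ab.2)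

/-- The Hamming weight of a vector: the number of nonzero coordinates. -/
def wt {ι : Type*} {p : ℕ} (c : ι → ZMod p) : ℕ := Nat.card {x : ι // c x ≠ 0}

section Aux

lemma my_fix_pow_pow {F : Type*} [Monoid F] {y : F} {a : ℕ} (hy : y ^ a = y) :
    ∀ j, y ^ (a ^ j) = y
  | 0 => pow_one y
  | j + 1 => by rw [pow_succ, pow_mul, my_fix_pow_pow hy j, hy]

lemma my_exists_orderOf {G : Type*} [Group G] [Finite G] [IsCyclic G] {n : ℕ}
    (hn : n ∣ Nat.card G) : ∃ u : G, orderOf u = n := by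
  obtain ⟨g, hg⟩ := IsCyclic.exists_generator (α := G)
  have hord : orderOf g = Nat.card G := orderOf_eq_card_of_forall_mem_zpowers hg
  have hc : Nat.card G ≠ 0 := Nat.card_pos.ne'
  refine ⟨g ^ (Nat.card G / n), ?_⟩
  rw [orderOf_pow, hord, Nat.gcd_eq_right (Nat.div_dvd_of_dvd hn), Nat.div_div_self hn hc]

lemma my_card_fix {F : Type*} [Field F] [Fintype F] {a : ℕ} (ha : 2 ≤ a)
    (hdvd : a - 1 ∣ Fintype.card F - 1) :
    Nat.card {y : F | y ^ a = y} = a := by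
  classical
  obtain ⟨u, hu⟩ := my_exists_orderOf (G := Fˣ) (n := a - 1)
    (by rw [Nat.card_units, Nat.card_eq_fintype_card]; exact hdvd)
  have hprim : IsPrimitiveRoot ((u : F)) (a - 1) := by
    have h1 := IsPrimitiveRoot.orderOf u
    rw [hu] at h1
    exact IsPrimitiveRoot.coe_units_iff.mpr h1
  have h0 : 0 < a - 1 := by omega
  have hset : {y : F | y ^ a = y} = ↑(insert (0 : F) (Polynomial.nthRootsFinset (a - 1) (1 : F))) := by
    ext y
    simp only [Set.mem_setOf_eq, Finset.coe_insert, Set.mem_insert_iff, Finset.mem_coe,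
      Polynomial.mem_nthRootsFinset h0 (1 : F)]
    constructor
    · intro h
      rcases eq_or_ne y 0 with h0' | h0'
      · exact Or.inl h0'
      · refine Or.inr (mul_right_cancel₀ h0' ?_)
        rw [one_mul, ← pow_succ, Nat.sub_add_cancel (by omega), h]
    · rintro (rfl | h)
      · exact zero_pow (by omega)
      · calc y ^ a = y ^ (a - 1) * y := by rw [← pow_succ, Nat.sub_add_cancel (by omega)]
          _ = y := by rw [h, one_mul]
  rw [Nat.card_coe_set_eq, hset, Set.ncard_coe_finset,
    Finset.card_insert_of_notMem, hprim.card_nthRootsFinset]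
  · omega
  · intro hmem
    have := (Polynomial.mem_nthRootsFinset h0 (1 : F)).mp hmem
    rw [zero_pow h0.ne'] at this
    exact zero_ne_one this

lemma my_u_pow_sq {F : Type*} [Field F] {u0 : F} {a : ℕ} (haodd : Odd a)
    (hu : u0 ^ (a - 1) = -1) : u0 ^ (a ^ 2 - 1) = 1 := by
  have h1 : a ^ 2 - 1 = (a + 1) * (a - 1) := by simpa using Nat.sq_sub_sq a 1
  have h2 : Even (a + 1) := by obtain ⟨c, rfl⟩ := haodd; exact ⟨c + 1, by ring⟩
  rw [h1, mul_comm, pow_mul, hu]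
  exact h2.neg_one_pow

lemma my_u_pow_odd {F : Type*} [Field F] {u0 : F} {a : ℕ} (ha : 2 ≤ a) (haodd : Odd a)
    (hu : u0 ^ (a - 1) = -1) {r : ℕ} (hr : Odd r) : u0 ^ (a ^ r - 1) = -1 := by
  obtain ⟨c, rfl⟩ := hr
  have hX : 1 ≤ a ^ (2 * c) := Nat.one_le_pow _ _ (by omega)
  have hXa : a ^ (2 * c) * a = a ^ (2 * c + 1) := (pow_succ a (2 * c)).symm
  have h2c : u0 ^ (a ^ (2 * c) - 1) = 1 := by
    obtain ⟨q, hq⟩ : a ^ 2 - 1 ∣ a ^ (2 * c) - 1 := by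
      rw [pow_mul]
      simpa using Nat.sub_dvd_pow_sub_pow (a ^ 2) 1 c
    rw [hq, pow_mul, my_u_pow_sq haodd hu, one_pow]
  have hle : a ≤ a ^ (2 * c) * a := Nat.le_mul_of_pos_left a (by positivity)
  have harith : a ^ (2 * c + 1) - 1 = (a ^ (2 * c) - 1) * a + (a - 1) := by
    rw [Nat.sub_mul, one_mul, ← hXa]
    omega
  rw [harith, pow_add, pow_mul, h2c, one_pow, one_mul, hu]

end Aux

/-- if `m/s` is even then the set of `β` for which
`X^{p^{2l}} + X = -β^{p^l}` is solvable has `p^{e-2s}` elements (paper Lemma 6). -/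
theorem card_solvable_set (p e l m s : ℕ) [Fact p.Prime] (hp : Odd p)
    (hl : 0 < l) (hm : 1 ≤ m) (he : e = 2 * m) (hs : s = Nat.gcd l e)
    (hsm : s ∣ m) (heven : Even (m / s)) :
    Nat.card {β : GaloisField p e //
      ∃ x : GaloisField p e, x ^ p ^ (2 * l) + x = -β ^ p ^ l} = p ^ (e - 2 * s) := by
  classical
  have hp' : p.Prime := Fact.out
  have hp3 : 3 ≤ p := by
    obtain ⟨c, hc⟩ := hp
    have := hp'.two_le
    omega
  have hs0 : 0 < s := by rw [hs]; exact Nat.gcd_pos_of_pos_left e hl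
  have hsl : s ∣ l := hs ▸ Nat.gcd_dvd_left l e
  have he0 : e ≠ 0 := by omega
  set F := GaloisField p e with hF
  letI : Fintype F := Fintype.ofFinite F
  have hcardF : Nat.card F = p ^ e := GaloisField.card p e he0
  have hFq : Fintype.card F = p ^ e := by rw [← Nat.card_eq_fintype_card, hcardF]
  set a : ℕ := p ^ (2 * s) with haa
  set r : ℕ := l / s with hrr
  set t : ℕ := m / s with htt
  have hsr : s * r = l := Nat.mul_div_cancel' hsl
  have hst : s * t = m := Nat.mul_div_cancel' hsm
  have ha2 : 2 ≤ a := le_trans (by omega) (Nat.le_self_pow (by omega) p)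
  have haodd : Odd a := hp.pow
  have har : a ^ r = p ^ (2 * l) := by
    rw [haa, ← pow_mul, mul_assoc, hsr]
  have hat : a ^ t = p ^ e := by
    rw [haa, ← pow_mul, mul_assoc, hst, he]
  have hr0 : r ≠ 0 := by
    intro h
    rw [h, mul_zero] at hsr
    omega
  have hr_odd : Odd r := by
    rcases Nat.even_or_odd r with hre | hro
    · exfalso
      obtain ⟨c, hc⟩ := hre
      have h2l : 2 * s ∣ l := ⟨c, by rw [← hsr, hc]; ring⟩
      have h2e : 2 * s ∣ e := ⟨t, by rw [he, ← hst]; ring⟩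
      have hgd : 2 * s ∣ Nat.gcd l e := Nat.dvd_gcd h2l h2e
      rw [← hs] at hgd
      have := Nat.le_of_dvd hs0 hgd
      omega
    · exact hro
  have hglm : Nat.gcd l m = s := by
    refine Nat.dvd_antisymm ?_ (Nat.dvd_gcd hsl hsm)
    rw [hs]
    exact Nat.dvd_gcd (Nat.gcd_dvd_left l m)
      ((Nat.gcd_dvd_right l m).trans ⟨2, by omega⟩)
  have hcop : Nat.gcd r t = 1 := by
    have := Nat.coprime_div_gcd_div_gcd (m := l) (n := m) (by rw [hglm]; exact hs0)
    rwa [hglm] at this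
  have ht1 : 1 ≤ t := by
    have : s ≤ m := Nat.le_of_dvd (by omega) hsm
    rw [htt]
    exact (Nat.one_le_div_iff hs0).mpr this
  have hq1 : a - 1 ∣ Fintype.card F - 1 := by
    rw [hFq, ← hat]
    simpa using Nat.sub_dvd_pow_sub_pow a 1 t
  have hq2 : 2 * (a - 1) ∣ p ^ e - 1 := by
    obtain ⟨t', ht'⟩ := heven
    have h1 : a ^ 2 - 1 ∣ p ^ e - 1 := by
      rw [← hat, show t = t' * 2 by omega, pow_mul']
      simpa using Nat.sub_dvd_pow_sub_pow (a ^ 2) 1 t'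
    refine dvd_trans ?_ h1
    have hsq : a ^ 2 - 1 = (a + 1) * (a - 1) := by simpa using Nat.sq_sub_sq a 1
    have h2 : 2 ∣ a + 1 := by obtain ⟨c, hc⟩ := haodd; omega
    rw [hsq]
    exact mul_dvd_mul h2 dvd_rfl
  -- find u0 with u0 ^ (a - 1) = -1
  obtain ⟨u, huord⟩ := my_exists_orderOf (G := Fˣ) (n := 2 * (a - 1))
    (by rw [Nat.card_units, hcardF]; exact hq2)
  set u0 : F := (u : F) with hu0def
  have hu0 : u0 ≠ 0 := Units.ne_zero u
  have huN : u0 ^ (2 * (a - 1)) = 1 := by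
    have h1 : u ^ (2 * (a - 1)) = 1 := by rw [← huord]; exact pow_orderOf_eq_one u
    rw [hu0def, ← Units.val_pow_eq_pow_val, h1, Units.val_one]
  have hu1 : u0 ^ (a - 1) = -1 := by
    have hsq : u0 ^ (a - 1) * u0 ^ (a - 1) = 1 := by
      rw [← pow_add, show a - 1 + (a - 1) = 2 * (a - 1) by omega]
      exact huN
    have hne : u0 ^ (a - 1) ≠ 1 := by
      intro h
      have h1 : u ^ (a - 1) = 1 := by
        apply Units.ext
        rw [Units.val_pow_eq_pow_val, Units.val_one]
        exact h
      have h2 := orderOf_dvd_of_pow_eq_one h1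
      rw [huord] at h2
      have := Nat.le_of_dvd (by omega) h2
      omega
    rcases mul_self_eq_one_iff.mp hsq with h | h
    · exact absurd h hne
    · exact h
  have hua : u0 ^ (a ^ r) = -u0 := by
    have h1 := my_u_pow_odd ha2 haodd hu1 hr_odd
    have h2 : u0 ^ (a ^ r) = u0 ^ (a ^ r - 1) * u0 := by
      rw [← pow_succ, Nat.sub_add_cancel (Nat.one_le_pow _ _ (by omega))]
    rw [h2, h1, neg_one_mul]
  -- the kernel equivalence
  have hker_equiv : Nat.card {x : F | x ^ p ^ (2 * l) + x = 0} = a := by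
    have hf : Function.Bijective
        (fun y : {y : F | y ^ a = y} =>
          (⟨u0 * y.1, by
            have hy := y.2
            simp only [Set.mem_setOf_eq] at hy ⊢
            rw [← har, mul_pow, hua, my_fix_pow_pow hy r]
            ring⟩ : {x : F | x ^ p ^ (2 * l) + x = 0})) := by
      constructor
      · rintro ⟨y1, h1⟩ ⟨y2, h2⟩ h
        have := congrArg Subtype.val h
        simp only at this
        exact Subtype.ext (mul_left_cancel₀ hu0 this)
      · rintro ⟨x, hx⟩
        simp only [Set.mem_setOf_eq] at hx
        have hmem : (u0⁻¹ * x) ∈ {y : F | y ^ a = y} := by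
          simp only [Set.mem_setOf_eq]
          rcases eq_or_ne x 0 with rfl | hx0
          · rw [mul_zero, zero_pow (by omega)]
          set y : F := u0⁻¹ * x with hy
          have hy0 : y ≠ 0 := mul_ne_zero (inv_ne_zero hu0) hx0
          have hxar : x ^ (a ^ r) = -x := by
            rw [har]
            linear_combination hx
          have hyar : y ^ (a ^ r) = y := by
            rw [hy, mul_pow, inv_pow, hua, hxar, inv_neg, neg_mul_neg]
          have h1 : y ^ (a ^ r - 1) = 1 := by
            have h2 : y ^ (a ^ r - 1) * y = 1 * y := by
              rw [← pow_succ, Nat.sub_add_cancel (Nat.one_le_pow _ _ (by omega)), one_mul]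
              exact hyar
            exact mul_right_cancel₀ hy0 h2
          have h2 : y ^ (a ^ t - 1) = 1 := by
            rw [hat, ← hFq]
            exact FiniteField.pow_card_sub_one_eq_one y hy0
          set o : ℕ := orderOf y with ho
          have hd1 : o ∣ a ^ r - 1 := orderOf_dvd_of_pow_eq_one h1
          have hd2 : o ∣ a ^ t - 1 := orderOf_dvd_of_pow_eq_one h2
          have har1 : 1 ≤ a ^ r := Nat.one_le_pow _ _ (by omega)
          have hat1 : 1 ≤ a ^ t := Nat.one_le_pow _ _ (by omega)
          have har2 : 2 ≤ a ^ r := le_trans ha2 (Nat.le_self_pow hr0 a)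
          have ho0 : o ≠ 0 := by
            intro h
            rw [h] at hd1
            have := zero_dvd_iff.mp hd1
            omega
          haveI : NeZero o := ⟨ho0⟩
          have hm1 : ((a : ZMod o)) ^ r = 1 := by
            have h3 : ((a ^ r - 1 : ℕ) : ZMod o) = 0 :=
              (ZMod.natCast_eq_zero_iff _ _).mpr hd1
            rwa [Nat.cast_sub har1, Nat.cast_pow, Nat.cast_one, sub_eq_zero] at h3
          have hm2 : ((a : ZMod o)) ^ t = 1 := by
            have h3 : ((a ^ t - 1 : ℕ) : ZMod o) = 0 :=
              (ZMod.natCast_eq_zero_iff _ _).mpr hd2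
            rwa [Nat.cast_sub hat1, Nat.cast_pow, Nat.cast_one, sub_eq_zero] at h3
          have hmod : (a : ZMod o) = 1 := by
            have h4 := (pow_gcd_eq_one (a := (a : ZMod o))).mpr ⟨hm1, hm2⟩
            rwa [hcop, pow_one] at h4
          have hoa : o ∣ a - 1 := by
            have h4 : ((a - 1 : ℕ) : ZMod o) = 0 := by
              rw [Nat.cast_sub (by omega), Nat.cast_one, hmod, sub_self]
            exact (ZMod.natCast_eq_zero_iff _ _).mp h4
          have h5 : y ^ (a - 1) = 1 := orderOf_dvd_iff_pow_eq_one.mp hoa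
          calc y ^ a = y ^ (a - 1) * y := by
                rw [← pow_succ, Nat.sub_add_cancel (by omega)]
            _ = y := by rw [h5, one_mul]
        refine ⟨⟨u0⁻¹ * x, hmem⟩, ?_⟩
        apply Subtype.ext
        simp only
        rw [mul_inv_cancel_left₀ hu0]
    have := Nat.card_congr (Equiv.ofBijective _ hf)
    rw [← this]
    exact my_card_fix ha2 hq1
  -- the additive homomorphism
  haveI : CharP F p := inferInstanceAs (CharP (GaloisField p e) p)
  set L : F →+ F := AddMonoidHom.mk' (fun x => x ^ p ^ (2 * l) + x)
    (fun x y => by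
      rw [add_pow_char_pow]
      ring) with hL
  have hkerL : Nat.card L.ker = a := by
    rw [← hker_equiv]
    apply Nat.card_congr
    exact Equiv.subtypeEquivRight (fun x => by
      simp [hL, AddMonoidHom.mem_ker, AddMonoidHom.mk'])
  have hsplit : Nat.card F = Nat.card (F ⧸ L.ker) * Nat.card L.ker :=
    AddSubgroup.card_eq_card_quotient_mul_card_addSubgroup L.ker
  have hquot : Nat.card (F ⧸ L.ker) = Nat.card L.range :=
    Nat.card_congr (QuotientAddGroup.quotientKerEquivRange L).toEquiv
  -- the bijection β ↦ -β ^ p ^ l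
  have hφinj : Function.Injective (fun β : F => -β ^ p ^ l) := by
    intro x y h
    simp only [neg_inj] at h
    have h2 : iterateFrobenius F p l x = iterateFrobenius F p l y := by
      rw [iterateFrobenius_def, iterateFrobenius_def]; exact neg_inj.mp h
    exact (iterateFrobenius F p l).injective h2
  have hφbij : Function.Bijective (fun β : F => -β ^ p ^ l) :=
    (Finite.injective_iff_bijective).mp hφinj
  set φ : F ≃ F := Equiv.ofBijective _ hφbij with hφ
  have htarget : Nat.card {β : F // ∃ x : F, x ^ p ^ (2 * l) + x = -β ^ p ^ l}
      = Nat.card L.range := by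
    apply Nat.card_congr
    refine Equiv.subtypeEquiv φ (fun β => ?_)
    simp only [hφ, Equiv.ofBijective_apply, AddMonoidHom.mem_range, hL,
      AddMonoidHom.mk'_apply]
  -- conclude
  have h2s : 2 * s ≤ e := by
    have : s ≤ m := Nat.le_of_dvd (by omega) hsm
    omega
  have hfin : Nat.card L.range * a = p ^ e := by
    rw [← hkerL, ← hquot, ← hsplit, hcardF]
  have hpow : p ^ e = p ^ (e - 2 * s) * a := by
    rw [haa, ← pow_add]
    congr 1
    omega
  have hrange : Nat.card L.range = p ^ (e - 2 * s) :=
    Nat.eq_of_mul_eq_mul_right (show 0 < a by omega) (by rw [hfin]; exact hpow)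
  rw [htarget, hrange]

end
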